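/- Consider the 18×63 binary matrix H' consisting of the first 18 rows of the binary expansion H₂ of the parity check matrix of the primitive narrow-sense BCH code of length 63 and designed distance 9 over GF(2^6) (rows given by binary expansions of (1, α^j, α^{2j}, ...) for α, α³, α⁵). Then H' H'^T = 0 over GF(2), i.e., the [63,45] BCH code of designed distance 7 is dual-containing. -/

import Mathlib

set_option maxRecDepth 8000

open Polynomial Matrix BigOperators

/-- The defining polynomial `x⁶ + x + 1` of GF(2⁶) over GF(2). -/
noncomputable def bchPoly : (ZMod 2)[X] := X ^ 6 + X + 1

lemma bchPoly_monic : bchPoly.Monic := by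
  unfold bchPoly
  rw [add_assoc]
  apply Polynomial.monic_X_pow_add
  apply lt_of_le_of_lt (Polynomial.degree_add_le _ _)
  rw [Polynomial.degree_X, Polynomial.degree_one]
  exact max_lt (by decide) (by decide)

/-- GF(2⁶), realized as GF(2)[x]/(x⁶+x+1), with primitive element `α` the class
of `x`, so `α⁶ + α + 1 = 0`. -/
abbrev F64 := AdjoinRoot bchPoly

/-- The power basis `1, α, ..., α⁵` of GF(2⁶) over GF(2), giving the 6-bit
binary representation of field elements. -/
noncomputable def bchBasis : Module.Basis (Fin bchPoly.natDegree) (ZMod 2) F64 :=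
  AdjoinRoot.powerBasisAux' bchPoly_monic

noncomputable def α : F64 := AdjoinRoot.root bchPoly

/-- The first 18 rows of the binary expansion of the BCH parity check matrix:
rows indexed by `(t,u)` with `t ∈ {0,1,2}` corresponding to `j = 2t+1 ∈
{1,3,5}` and `u` the bit position; the `(t,u),k` entry is the `u`-th bit of
`α^{jk}`. -/
noncomputable def H' : Matrix (Fin 3 × Fin bchPoly.natDegree) (Fin 63) (ZMod 2) :=
  Matrix.of fun r k => bchBasis.repr (α ^ ((2 * (r.1 : ℕ) + 1) * (k : ℕ))) r.2

/-- Table of the 63 powers of `α` as 6-bit bitmasks (bit `i` is the coefficient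
of `α^i`). -/
def tbl (n : ℕ) : ℕ :=
  [1, 2, 4, 8, 16, 32, 3, 6, 12, 24, 48, 35, 5, 10, 20, 40, 19, 38, 15, 30, 60,
   59, 53, 41, 17, 34, 7, 14, 28, 56, 51, 37, 9, 18, 36, 11, 22, 44, 27, 54, 47,
   29, 58, 55, 45, 25, 50, 39, 13, 26, 52, 43, 21, 42, 23, 46, 31, 62, 63, 61,
   57, 49, 33].getD n 0

/-- The bits of a bitmask, as elements of GF(2). -/
def bitv (c : ℕ) (i : Fin 6) : ZMod 2 := if c.testBit i then 1 else 0

/-- One step of the LFSR: multiplication by `α` on coefficient vectors,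
using `α⁶ = α + 1`. -/
def vstep (c : Fin 6 → ZMod 2) : Fin 6 → ZMod 2
  | 0 => c 5
  | 1 => c 0 + c 5
  | 2 => c 1
  | 3 => c 2
  | 4 => c 3
  | 5 => c 4

/-- Coefficient vectors of the powers of `α`, defined recursively. -/
def v : ℕ → Fin 6 → ZMod 2
  | 0 => bitv 1
  | n + 1 => vstep (v n)

lemma hdeg6 : bchPoly.natDegree = 6 := by
  unfold bchPoly; compute_degree!

lemma halpha : α ^ 6 + α + 1 = 0 := by
  have h : AdjoinRoot.mk bchPoly (X ^ 6 + X + 1 : (ZMod 2)[X]) = 0 := by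
    rw [show (X ^ 6 + X + 1 : (ZMod 2)[X]) = bchPoly from rfl]
    exact AdjoinRoot.mk_self
  simpa [map_add, map_pow, AdjoinRoot.mk_X, α] using h

lemma two_eq_zero : (2 : F64) = 0 := by
  have h : ((1 : ZMod 2) + 1) = 0 := by decide
  calc (2 : F64) = 1 + 1 := by norm_num
    _ = algebraMap (ZMod 2) F64 1 + algebraMap (ZMod 2) F64 1 := by
          rw [_root_.map_one]
    _ = algebraMap (ZMod 2) F64 (1 + 1) := (map_add _ _ _).symm
    _ = 0 := by rw [h, map_zero]

lemma halpha6 : α ^ 6 = α + 1 := by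
  linear_combination halpha - (α + 1) * two_eq_zero

lemma finv0 : ((0 : Fin 6) : ℕ) = 0 := rfl
lemma finv1 : ((1 : Fin 6) : ℕ) = 1 := rfl
lemma finv2 : ((2 : Fin 6) : ℕ) = 2 := rfl
lemma finv3 : ((3 : Fin 6) : ℕ) = 3 := rfl
lemma finv4 : ((4 : Fin 6) : ℕ) = 4 := rfl
lemma finv5 : ((5 : Fin 6) : ℕ) = 5 := rfl

lemma mul_step (c : Fin 6 → ZMod 2) :
    (∑ i : Fin 6, c i • α ^ (i : ℕ)) * α = ∑ i : Fin 6, vstep c i • α ^ (i : ℕ) := by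
  simp only [Fin.sum_univ_six, vstep, Algebra.smul_def, map_add,
    finv0, finv1, finv2, finv3, finv4, finv5]
  linear_combination (algebraMap (ZMod 2) F64 (c 5)) * halpha6

lemma pow_eq (n : ℕ) : α ^ n = ∑ i : Fin 6, v n i • α ^ (i : ℕ) := by
  induction n with
  | zero =>
    show α ^ 0 = ∑ i : Fin 6, bitv 1 i • α ^ (i : ℕ)
    rw [Fin.sum_univ_six]
    simp only [bitv, finv0, finv1, finv2, finv3, finv4, finv5,
      show Nat.testBit 1 0 = true from rfl, show Nat.testBit 1 1 = false from rfl,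
      show Nat.testBit 1 2 = false from rfl, show Nat.testBit 1 3 = false from rfl,
      show Nat.testBit 1 4 = false from rfl, show Nat.testBit 1 5 = false from rfl]
    norm_num
  | succ n ih =>
    rw [pow_succ, ih, mul_step]
    rfl

lemma step_tbl : ∀ k : Fin 63,
    vstep (bitv (tbl k.val)) = bitv (tbl ((k.val + 1) % 63)) := by decide

lemma v_eq (n : ℕ) : v n = bitv (tbl (n % 63)) := by
  induction n with
  | zero => rfl
  | succ n ih =>
    have h : (n + 1) % 63 = (n % 63 + 1) % 63 := by
      conv_lhs => rw [Nat.add_mod]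
    rw [show v (n + 1) = vstep (v n) from rfl, ih, h]
    exact step_tbl ⟨n % 63, Nat.mod_lt _ (by norm_num)⟩

lemma basis_eq (j : Fin bchPoly.natDegree) : bchBasis j = α ^ (j : ℕ) :=
  (AdjoinRoot.powerBasis' bchPoly_monic).basis_eq_pow j

lemma repr_pow (n : ℕ) (j : Fin bchPoly.natDegree) :
    bchBasis.repr (α ^ n) j = bitv (tbl (n % 63)) (Fin.cast hdeg6 j) := by
  have h : α ^ n =
      ∑ i : Fin bchPoly.natDegree, bitv (tbl (n % 63)) (Fin.cast hdeg6 i) • bchBasis i := by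
    rw [pow_eq n, v_eq n]
    refine Fintype.sum_equiv (finCongr hdeg6.symm) _ _ fun i => ?_
    simp [basis_eq, Fin.cast]
  rw [h, bchBasis.repr_sum_self]

lemma key : ∀ (t t' : Fin 3) (u u' : Fin 6),
    ∑ k : Fin 63, bitv (tbl ((2 * t.val + 1) * k.val % 63)) u *
      bitv (tbl ((2 * t'.val + 1) * k.val % 63)) u' = 0 := by decide

/-- The binary expansion is 6 bits, `α` satisfies `α⁶ + α + 1 = 0`, and the
first 18 binary rows of the BCH parity check matrix satisfy `H' H'ᵀ = 0`:
the [63,45] BCH code of designed distance 7 is dual-containing. -/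
theorem bch_63_45_dual_containing :
    bchPoly.natDegree = 6 ∧ α ^ 6 + α + 1 = 0 ∧ H' * H'ᵀ = 0 := by
  refine ⟨hdeg6, halpha, ?_⟩
  ext r s
  simp only [Matrix.mul_apply, Matrix.transpose_apply, H', Matrix.of_apply,
    Matrix.zero_apply, repr_pow]
  exact key r.1 s.1 (Fin.cast hdeg6 r.2) (Fin.cast hdeg6 s.2)
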